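/- arXiv:0711.2814 — 2 statements merged into one kernel-verified Lean document; each statement's English description precedes it below -/
import Mathlib

section
/- For any monotone nondecreasing function θ : ℝ → ℝ, any nonnegative reals a_i (i = 1,…,N) and nonnegative reals b_S indexed by nonempty subsets S ⊆ {1,…,N}, the map Θ : ℝ^N → ℝ^N with i-th component Θ(u)_i = a_i θ(u_i) - Σ_{S ∋ i} (b_S/|S|) θ(1 - Σ_{j∈S} u_j) is a monotone operator, i.e. (Θ(u) - Θ(v)) · (u - v) ≥ 0 for all u, v ∈ ℝ^N. -/
open Finset

theorem stmt_1 (N : ℕ) (hN : 0 < N) (θ : ℝ → ℝ) (hθ : Monotone θ)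
    (a : Fin N → ℝ) (ha : ∀ i, 0 ≤ a i)
    (b : Finset (Fin N) → ℝ) (hb : ∀ S : Finset (Fin N), S.Nonempty → 0 ≤ b S)
    (u v : Fin N → ℝ) :
    0 ≤ ∑ i : Fin N,
      ((a i * θ (u i) -
          ∑ S ∈ Finset.univ.powerset.filter (fun S => i ∈ S),
            (b S / (S.card : ℝ)) * θ (1 - ∑ j ∈ S, u j)) -
        (a i * θ (v i) -
          ∑ S ∈ Finset.univ.powerset.filter (fun S => i ∈ S),
            (b S / (S.card : ℝ)) * θ (1 - ∑ j ∈ S, v j))) * (u i - v i) := by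
  have hmono : ∀ x y : ℝ, 0 ≤ (θ x - θ y) * (x - y) := by
    intro x y
    rcases le_total x y with h | h
    · have := hθ h; nlinarith
    · have := hθ h; nlinarith
  have heq : ∀ i : Fin N,
      ((a i * θ (u i) -
          ∑ S ∈ Finset.univ.powerset.filter (fun S => i ∈ S),
            (b S / (S.card : ℝ)) * θ (1 - ∑ j ∈ S, u j)) -
        (a i * θ (v i) -
          ∑ S ∈ Finset.univ.powerset.filter (fun S => i ∈ S),
            (b S / (S.card : ℝ)) * θ (1 - ∑ j ∈ S, v j))) * (u i - v i)
      = a i * ((θ (u i) - θ (v i)) * (u i - v i)) +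
        ∑ S ∈ Finset.univ.powerset.filter (fun S => i ∈ S),
          (b S / (S.card : ℝ)) *
            ((θ (1 - ∑ j ∈ S, v j) - θ (1 - ∑ j ∈ S, u j)) * (u i - v i)) := by
    intro i
    have h2 : ∑ S ∈ Finset.univ.powerset.filter (fun S => i ∈ S),
          (b S / (S.card : ℝ)) *
            ((θ (1 - ∑ j ∈ S, v j) - θ (1 - ∑ j ∈ S, u j)) * (u i - v i))
        = ((∑ S ∈ Finset.univ.powerset.filter (fun S => i ∈ S),
              (b S / (S.card : ℝ)) * θ (1 - ∑ j ∈ S, v j)) -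
           (∑ S ∈ Finset.univ.powerset.filter (fun S => i ∈ S),
              (b S / (S.card : ℝ)) * θ (1 - ∑ j ∈ S, u j))) * (u i - v i) := by
      rw [← Finset.sum_sub_distrib, Finset.sum_mul]
      exact Finset.sum_congr rfl (fun S _ => by ring)
    rw [h2]; ring
  rw [Finset.sum_congr rfl (fun i _ => heq i), Finset.sum_add_distrib]
  have h1 : 0 ≤ ∑ i : Fin N, a i * ((θ (u i) - θ (v i)) * (u i - v i)) :=
    Finset.sum_nonneg fun i _ => mul_nonneg (ha i) (hmono _ _)
  have h2 : (∑ i : Fin N, ∑ S ∈ Finset.univ.powerset.filter (fun S => i ∈ S),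
          (b S / (S.card : ℝ)) *
            ((θ (1 - ∑ j ∈ S, v j) - θ (1 - ∑ j ∈ S, u j)) * (u i - v i)))
      = ∑ S ∈ (Finset.univ : Finset (Fin N)).powerset, ∑ i ∈ S,
          (b S / (S.card : ℝ)) *
            ((θ (1 - ∑ j ∈ S, v j) - θ (1 - ∑ j ∈ S, u j)) * (u i - v i)) := by
    exact Finset.sum_comm' (fun i S => by simp [Finset.mem_filter, and_comm])
  have h3 : 0 ≤ ∑ S ∈ (Finset.univ : Finset (Fin N)).powerset, ∑ i ∈ S,
          (b S / (S.card : ℝ)) *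
            ((θ (1 - ∑ j ∈ S, v j) - θ (1 - ∑ j ∈ S, u j)) * (u i - v i)) := by
    apply Finset.sum_nonneg
    intro S _
    rcases S.eq_empty_or_nonempty with rfl | hS
    · simp
    · rw [← Finset.mul_sum, ← Finset.mul_sum]
      apply mul_nonneg (div_nonneg (hb S hS) (Nat.cast_nonneg _))
      have : ∑ i ∈ S, (u i - v i) = (1 - ∑ j ∈ S, v j) - (1 - ∑ j ∈ S, u j) := by
        rw [Finset.sum_sub_distrib]; ring
      rw [this]
      exact hmono _ _
  rw [h2]
  linarith
end

section
/- Weak-* convergence of indicator functions to an indicator function implies strong L^p convergence: if χ_ν are indicator functions of measurable subsets of a finite measure set ω, χ_ν ⇀ χ weak-* in L^∞(ω), and χ is itself the indicator function of a measurable set, then χ_ν → χ strongly in L^p(ω) for every 1 ≤ p < ∞. -/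
open MeasureTheory Filter

theorem stmt_17 {α : Type*} [MeasurableSpace α] (μ : Measure α)
    [IsFiniteMeasure μ]
    (A : ℕ → Set α) (B : Set α)
    (hA : ∀ ν, MeasurableSet (A ν)) (hB : MeasurableSet B)
    -- weak-* convergence in L^∞: χ_{A ν} ⇀ χ_B against every L¹ function
    (hconv : ∀ g : α → ℝ, Integrable g μ →
      Tendsto (fun ν => ∫ x, Set.indicator (A ν) (fun _ => (1:ℝ)) x * g x ∂μ)
        atTop (nhds (∫ x, Set.indicator B (fun _ => (1:ℝ)) x * g x ∂μ))) :
    ∀ p : ℝ, 1 ≤ p →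
      Tendsto (fun ν => ∫ x,
          |Set.indicator (A ν) (fun _ => (1:ℝ)) x -
            Set.indicator B (fun _ => (1:ℝ)) x| ^ p ∂μ)
        atTop (nhds 0) := by
  intro p hp
  set χ : Set α → α → ℝ := fun S => Set.indicator S (fun _ => (1:ℝ)) with hχ
  have hint : ∀ S : Set α, MeasurableSet S → Integrable (χ S) μ := fun S hS =>
    (integrable_indicator_iff hS).2 (integrableOn_const (measure_ne_top μ S))
  have hmeas : ∀ S : Set α, MeasurableSet S → Measurable (χ S) := fun S hS =>
    (measurable_const.indicator hS)
  have hbd : ∀ S : Set α, ∀ x, |χ S x| ≤ 1 := by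
    intro S x
    by_cases hx : x ∈ S <;> simp [χ, Set.indicator_of_mem, Set.indicator_of_notMem, hx]
  have hintmul : ∀ ν, Integrable (fun x => χ (A ν) x * χ B x) μ := fun ν =>
    (hint B hB).bdd_mul (hmeas (A ν) (hA ν)).aestronglyMeasurable (Filter.Eventually.of_forall (hbd (A ν)))
  have h1 := hconv (fun _ => (1:ℝ)) (integrable_const 1)
  simp only [mul_one] at h1
  have h2 := hconv (χ B) (hint B hB)
  have key : ∀ ν, (∫ x, |χ (A ν) x - χ B x| ^ p ∂μ)
      = (∫ x, χ (A ν) x ∂μ) + (∫ x, χ B x ∂μ)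
        - 2 * ∫ x, χ (A ν) x * χ B x ∂μ := by
    intro ν
    have e : ∀ x, |χ (A ν) x - χ B x| ^ p
        = χ (A ν) x + χ B x - 2 * (χ (A ν) x * χ B x) := by
      intro x
      by_cases ha : x ∈ A ν <;> by_cases hb : x ∈ B <;>
        simp [χ, Set.indicator_of_mem, Set.indicator_of_notMem, ha, hb,
          Real.one_rpow, Real.zero_rpow (by linarith : p ≠ 0)] <;> norm_num
    have i1 : Integrable (fun x => χ (A ν) x + χ B x) μ :=
      (hint _ (hA ν)).add (hint B hB)
    have i2 : Integrable (fun x => 2 * (χ (A ν) x * χ B x)) μ :=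
      (hintmul ν).const_mul 2
    simp_rw [e]
    rw [integral_sub i1 i2, integral_add (hint _ (hA ν)) (hint B hB), integral_const_mul]
  have cB : (∫ x, χ B x * χ B x ∂μ) = ∫ x, χ B x ∂μ := by
    apply integral_congr_ae
    filter_upwards with x
    by_cases hb : x ∈ B <;> simp [χ, Set.indicator_of_mem, Set.indicator_of_notMem, hb]
  rw [cB] at h2
  have h3 := (h1.add (tendsto_const_nhds :
      Tendsto (fun _ : ℕ => ∫ x, χ B x ∂μ) atTop _)).sub (h2.const_mul 2)
  show Tendsto (fun ν => ∫ x, |χ (A ν) x - χ B x| ^ p ∂μ) atTop (nhds 0)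
  simp only [key]
  convert h3 using 2
  ring
end
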